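/- Let Ĥ(k) = diag(e^{ik}, e^{-ik})·H and ν_d(k) = Tr(Ĥ(k)^{-d} · (i d/dk)² Ĥ(k)^d)/(2d). For d = 2, ν₂(k) = 1 for all k. -/
import Mathlib

open Matrix Complex

/-- The 2×2 Hadamard matrix `(1/√2)[[1,1],[1,-1]]`. -/
noncomputable def hadamard2 : Matrix (Fin 2) (Fin 2) ℂ :=
  ((1 / Real.sqrt 2 : ℝ) : ℂ) • !![1, 1; 1, -1]

/-- The Fourier-transformed one-step evolution `Ĥ(k) = diag(e^{ik}, e^{-ik})·H`. -/
noncomputable def Hhat (k : ℝ) : Matrix (Fin 2) (Fin 2) ℂ :=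
  Matrix.diagonal ![Complex.exp (Complex.I * k), Complex.exp (-(Complex.I * k))] * hadamard2

lemma Hsq (t : ℝ) : Hhat t ^ 2 =
    ((1:ℂ)/2) • !![Complex.exp ((2*Complex.I)*t) + 1, Complex.exp ((2*Complex.I)*t) - 1;
      1 - Complex.exp ((-(2*Complex.I))*t), 1 + Complex.exp ((-(2*Complex.I))*t)] := by
  have hs2 : ((Real.sqrt 2 : ℂ))⁻¹ ^ 2 = 1/2 := by
    rw [← Complex.ofReal_inv, ← Complex.ofReal_pow, sq, ← one_div, div_mul_div_comm,
      Real.mul_self_sqrt (by norm_num)]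
    norm_num
  have hE : Complex.exp (Complex.I * t) ^ 2 = Complex.exp (Complex.I * t * 2) := by
    rw [sq, ← Complex.exp_add]; ring_nf
  have hE' : Complex.exp (-(Complex.I * t)) ^ 2 = Complex.exp (-(Complex.I * t * 2)) := by
    rw [sq, ← Complex.exp_add]; ring_nf
  have hee : Complex.exp (Complex.I * t) * Complex.exp (-(Complex.I * t)) = 1 := by
    rw [← Complex.exp_add]; simp
  ext i j
  fin_cases i <;> fin_cases j <;>
    simp [Hhat, hadamard2, pow_two, Matrix.mul_apply, Fin.sum_univ_two, Matrix.diagonal] <;>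
    ring_nf <;>
    simp only [hs2, ← hE, ← hE'] <;>
    first
      | linear_combination (1/2 : ℂ) * hee
      | linear_combination (-1/2 : ℂ) * hee

lemma hdexp (c : ℂ) (x : ℝ) :
    HasDerivAt (fun t : ℝ => Complex.exp (c * t)) (Complex.exp (c * x) * c) x := by
  have h1 : HasDerivAt (fun t : ℝ => (c * t : ℂ)) c x := by
    simpa using (Complex.ofRealCLM.hasDerivAt (x := x)).const_mul c
  simpa using h1.cexp

lemma hd2 (a b c : ℂ) (x : ℝ) :
    deriv (fun t' : ℝ => deriv (fun t : ℝ => a * Complex.exp (c * t) + b) t') x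
      = a * c^2 * Complex.exp (c * x) := by
  have h1 : (fun t' : ℝ => deriv (fun t : ℝ => a * Complex.exp (c * t) + b) t')
      = fun t' : ℝ => (a * c) * Complex.exp (c * t') := by
    funext t'
    exact ((((hdexp c t').const_mul a).add_const b).deriv).trans (by ring)
  rw [h1]
  exact (((hdexp c x).const_mul (a*c)).deriv).trans (by ring)

/-- `ν₂(k) = Tr(Ĥ(k)^{-2} · (i d/dk)² Ĥ(k)²)/(2·2) = 1` for all `k`;
note `(i d/dk)² = -d²/dk²` acting entrywise. -/
theorem nu_two_eq_one (k : ℝ) :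
    Matrix.trace ((Hhat k ^ 2)⁻¹ *
        Matrix.of (fun i j : Fin 2 =>
          -(deriv (fun k' : ℝ => deriv (fun k'' : ℝ => (Hhat k'' ^ 2) i j) k') k))) /
      (2 * 2) = 1 := by
  set E : ℂ := Complex.exp ((2*Complex.I)*k) with hEdef
  set G : ℂ := Complex.exp ((-(2*Complex.I))*k) with hGdef
  have hEG : E * G = 1 := by
    rw [hEdef, hGdef, ← Complex.exp_add]
    norm_num
  clear_value E G
  have h00 : (fun k'' : ℝ => (Hhat k'' ^ 2) 0 0)
      = fun t : ℝ => (1/2 : ℂ) * Complex.exp ((2*Complex.I) * t) + 1/2 :=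
    funext fun t => by rw [Hsq t]; simp; ring
  have h01 : (fun k'' : ℝ => (Hhat k'' ^ 2) 0 1)
      = fun t : ℝ => (1/2 : ℂ) * Complex.exp ((2*Complex.I) * t) + (-(1/2)) :=
    funext fun t => by rw [Hsq t]; simp; ring
  have h10 : (fun k'' : ℝ => (Hhat k'' ^ 2) 1 0)
      = fun t : ℝ => (-(1/2) : ℂ) * Complex.exp ((-(2*Complex.I)) * t) + 1/2 :=
    funext fun t => by rw [Hsq t]; simp; ring
  have h11 : (fun k'' : ℝ => (Hhat k'' ^ 2) 1 1)
      = fun t : ℝ => (1/2 : ℂ) * Complex.exp ((-(2*Complex.I)) * t) + 1/2 :=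
    funext fun t => by rw [Hsq t]; simp; ring
  -- the (negated) second derivative matrix
  have hM : Matrix.of (fun i j : Fin 2 =>
      -(deriv (fun k' : ℝ => deriv (fun k'' : ℝ => (Hhat k'' ^ 2) i j) k') k))
      = !![2*E, 2*E; -(2*G), 2*G] := by
    ext i j
    fin_cases i <;> fin_cases j
    · show -(deriv (fun k' : ℝ => deriv (fun k'' : ℝ => (Hhat k'' ^ 2) 0 0) k') k) = 2*E
      rw [h00, hd2, ← hEdef]
      linear_combination (-2*E) * Complex.I_sq
    · show -(deriv (fun k' : ℝ => deriv (fun k'' : ℝ => (Hhat k'' ^ 2) 0 1) k') k) = 2*E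
      rw [h01, hd2, ← hEdef]
      linear_combination (-2*E) * Complex.I_sq
    · show -(deriv (fun k' : ℝ => deriv (fun k'' : ℝ => (Hhat k'' ^ 2) 1 0) k') k) = -(2*G)
      rw [h10, hd2, ← hGdef]
      linear_combination (2*G) * Complex.I_sq
    · show -(deriv (fun k' : ℝ => deriv (fun k'' : ℝ => (Hhat k'' ^ 2) 1 1) k') k) = 2*G
      rw [h11, hd2, ← hGdef]
      linear_combination (-2*G) * Complex.I_sq
  have hinv : (Hhat k ^ 2)⁻¹ = ((1:ℂ)/2) • !![1 + G, 1 - E; G - 1, 1 + E] := by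
    apply Matrix.inv_eq_right_inv
    rw [Hsq k]
    ext i j
    fin_cases i <;> fin_cases j <;>
      · simp only [← hEdef, ← hGdef, Matrix.mul_apply, Matrix.smul_apply, Fin.sum_univ_two,
          Matrix.cons_val', Matrix.cons_val_zero, Matrix.cons_val_one, Matrix.head_cons,
          Matrix.head_fin_const, smul_eq_mul, Matrix.one_apply, Fin.isValue]
        norm_num
        first
          | ring1
          | linear_combination ((1:ℂ)/2) * hEG
  rw [hinv, hM]
  rw [show Matrix.trace (((1:ℂ)/2) • !![1 + G, 1 - E; G - 1, 1 + E] * !![2*E, 2*E; -(2*G), 2*G]) = (4:ℂ) by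
    simp [Matrix.trace_fin_two, Matrix.mul_apply, Fin.sum_univ_two]
    first
      | ring1
      | linear_combination (4:ℂ) * hEG]
  norm_num
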